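/- arXiv:2602.08232 — 2 statements merged into one kernel-verified Lean document; each statement's English description precedes it below -/
import Mathlib

section
/- For all L ≻ 0 and X ∈ R^{m×n}, the choice L = √(β/(2α)) · √(X X^T + εI) in the inequality α tr(L) + (β/2) tr(X^T L^{-1} X) gives a value at most √(2αβ) · tr(√(X X^T + εI)); in particular, inf over L ≻ 0 of α tr(L) + (β/2) tr(X^T L^{-1} X) ≤ √(2αβ) ||X||_* in the limit ε → 0. -/
open Matrix Finset
open scoped Classical

noncomputable def psqrt {m : ℕ} (A : Matrix (Fin m) (Fin m) ℝ) : Matrix (Fin m) (Fin m) ℝ :=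
  if h : A.PosSemidef then
    h.1.eigenvectorUnitary.1 * diagonal (Real.sqrt ∘ h.1.eigenvalues) *
      (star h.1.eigenvectorUnitary : Matrix (Fin m) (Fin m) ℝ)
  else 0

noncomputable def nuclearNorm {m : ℕ} {n : Type*} [Fintype n]
    (A : Matrix (Fin m) n ℝ) : ℝ :=
  (psqrt (A * Aᵀ)).trace

section
open scoped MatrixOrder

noncomputable def msqrt {k : ℕ} (A : Matrix (Fin k) (Fin k) ℝ) : Matrix (Fin k) (Fin k) ℝ :=
  CFC.sqrt A

lemma psqrt_eq_csqrt {k : ℕ} {A : Matrix (Fin k) (Fin k) ℝ} (hA : A.PosSemidef) :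
    psqrt A = msqrt A := by
  unfold msqrt
  have hA0 : 0 ≤ A := nonneg_iff_posSemidef.mpr hA
  rw [psqrt, dif_pos hA, CFC.sqrt_eq_real_sqrt A hA0, cfcₙ_eq_cfc, hA.1.cfc_eq]
  simp [IsHermitian.cfc, RCLike.ofReal_real_eq_id]

lemma posSemidef_csqrt {k : ℕ} (A : Matrix (Fin k) (Fin k) ℝ) : (msqrt A).PosSemidef :=
  nonneg_iff_posSemidef.mp (CFC.sqrt_nonneg A)

lemma csqrt_mul_self {k : ℕ} {A : Matrix (Fin k) (Fin k) ℝ} (hA : A.PosSemidef) :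
    msqrt A * msqrt A = A :=
  CFC.sqrt_mul_sqrt_self A (nonneg_iff_posSemidef.mpr hA)

lemma eq_csqrt_of_sq_eq {k : ℕ} {A C : Matrix (Fin k) (Fin k) ℝ} (hC : C.PosSemidef)
    (h : C ^ 2 = A) : C = msqrt A :=
  (CFC.sqrt_unique (by rw [← pow_two]; exact h) (nonneg_iff_posSemidef.mpr hC)).symm

end

lemma psd_trace_nonneg {k : ℕ} {A : Matrix (Fin k) (Fin k) ℝ} (hA : A.PosSemidef) :
    0 ≤ A.trace := by
  rw [Matrix.trace]
  refine Finset.sum_nonneg fun i _ => ?_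
  exact hA.diag_nonneg

lemma posDef_of_sq {k : ℕ} {Q S : Matrix (Fin k) (Fin k) ℝ} (hQ : Q.PosSemidef)
    (h2 : Q * Q = S) (hS : S.PosDef) : Q.PosDef := by
  rw [hQ.posDef_iff_isUnit]
  exact isUnit_of_mul_isUnit_left (h2 ▸ hS.isUnit)

lemma posDef_smul' {k : ℕ} {Q : Matrix (Fin k) (Fin k) ℝ} (hQ : Q.PosDef) {c : ℝ}
    (hc : 0 < c) : (c • Q).PosDef := hQ.smul hc

lemma inv_smul_mat {k : ℕ} {Q : Matrix (Fin k) (Fin k) ℝ} (hQ : IsUnit Q.det) {c : ℝ}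
    (hc : c ≠ 0) : (c • Q)⁻¹ = c⁻¹ • Q⁻¹ := by
  apply Matrix.inv_eq_left_inv
  rw [Matrix.smul_mul, Matrix.mul_smul, smul_smul, inv_mul_cancel₀ hc, one_smul,
    Matrix.nonsing_inv_mul Q hQ]

lemma sqrt_add_le' {x y : ℝ} (hx : 0 ≤ x) (hy : 0 ≤ y) :
    Real.sqrt (x + y) ≤ Real.sqrt x + Real.sqrt y := by
  nlinarith [Real.sq_sqrt hx, Real.sq_sqrt hy, Real.sqrt_nonneg x, Real.sqrt_nonneg y,
    Real.sqrt_le_sqrt (show x + y ≤ (Real.sqrt x + Real.sqrt y)^2 by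
      nlinarith [Real.sq_sqrt hx, Real.sq_sqrt hy, Real.sqrt_nonneg x, Real.sqrt_nonneg y]),
    Real.sqrt_sq (by positivity : (0:ℝ) ≤ Real.sqrt x + Real.sqrt y)]

/-- with `L = √(β/(2α)) · √(X Xᵀ + ε I)`, the quantity
`α tr(L) + (β/2) tr(Xᵀ L⁻¹ X)` is at most `√(2αβ) tr(√(X Xᵀ + ε I))`; in particular
the infimum over `L ≻ 0` of `α tr(L) + (β/2) tr(Xᵀ L⁻¹ X)` is at most
`√(2αβ) ‖X‖_*` in the limit `ε → 0`. -/
theorem stmt7 {m n : ℕ} (α β : ℝ) (hα : 0 < α) (hβ : 0 < β)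
    (X : Matrix (Fin m) (Fin n) ℝ) :
    (∀ ε : ℝ, 0 < ε →
      ∀ L : Matrix (Fin m) (Fin m) ℝ,
        L = Real.sqrt (β / (2 * α)) •
              psqrt (X * Xᵀ + ε • (1 : Matrix (Fin m) (Fin m) ℝ)) →
        α * L.trace + β / 2 * (Xᵀ * L⁻¹ * X).trace
          ≤ Real.sqrt (2 * α * β) *
              (psqrt (X * Xᵀ + ε • (1 : Matrix (Fin m) (Fin m) ℝ))).trace) ∧
    (∀ δ : ℝ, 0 < δ → ∃ L : Matrix (Fin m) (Fin m) ℝ, L.PosDef ∧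
      α * L.trace + β / 2 * (Xᵀ * L⁻¹ * X).trace
        ≤ Real.sqrt (2 * α * β) * nuclearNorm X + δ) := by
  have hA : (X * Xᵀ).PosSemidef := by
    have := posSemidef_self_mul_conjTranspose X
    rwa [conjTranspose_eq_transpose_of_trivial] at this
  set c := Real.sqrt (β / (2 * α)) with hcdef
  have hc : 0 < c := Real.sqrt_pos.mpr (by positivity)
  have hc2 : c ^ 2 = β / (2 * α) := Real.sq_sqrt (by positivity)
  have hβc : β = 2 * α * c ^ 2 := by
    field_simp at hc2; linarith
  have hkey : α * c + β / 2 * c⁻¹ = Real.sqrt (2 * α * β) := by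
    have h1 : α * c + β / 2 * c⁻¹ = 2 * α * c := by
      rw [hβc]; field_simp; ring
    rw [h1, show 2 * α * β = (2 * α * c) ^ 2 by rw [hβc]; ring,
      Real.sqrt_sq (by positivity)]
  -- positive definiteness of psqrt (X Xᵀ + ε I)
  have hS : ∀ ε : ℝ, 0 < ε →
      (X * Xᵀ + ε • (1 : Matrix (Fin m) (Fin m) ℝ)).PosDef := fun ε hε =>
    Matrix.PosDef.posSemidef_add hA (posDef_smul' Matrix.PosDef.one hε)
  have hQfacts : ∀ ε : ℝ, 0 < ε →
      (psqrt (X * Xᵀ + ε • (1 : Matrix (Fin m) (Fin m) ℝ))).PosDef ∧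
      psqrt (X * Xᵀ + ε • (1 : Matrix (Fin m) (Fin m) ℝ)) *
        psqrt (X * Xᵀ + ε • (1 : Matrix (Fin m) (Fin m) ℝ)) =
        X * Xᵀ + ε • (1 : Matrix (Fin m) (Fin m) ℝ) := by
    intro ε hε
    have hSε := hS ε hε
    have hpsd := hSε.posSemidef
    have hQdef : psqrt (X * Xᵀ + ε • (1 : Matrix (Fin m) (Fin m) ℝ)) = msqrt (X * Xᵀ + ε • (1 : Matrix (Fin m) (Fin m) ℝ)) :=
      psqrt_eq_csqrt hpsd
    have hQQ : psqrt (X * Xᵀ + ε • (1 : Matrix (Fin m) (Fin m) ℝ)) *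
        psqrt (X * Xᵀ + ε • (1 : Matrix (Fin m) (Fin m) ℝ)) =
        X * Xᵀ + ε • (1 : Matrix (Fin m) (Fin m) ℝ) := by
      rw [hQdef]; exact csqrt_mul_self hpsd
    exact ⟨posDef_of_sq (hQdef ▸ posSemidef_csqrt _) hQQ hSε, hQQ⟩
  have hmain : ∀ ε : ℝ, 0 < ε →
      ∀ L : Matrix (Fin m) (Fin m) ℝ,
        L = c • psqrt (X * Xᵀ + ε • (1 : Matrix (Fin m) (Fin m) ℝ)) →
        α * L.trace + β / 2 * (Xᵀ * L⁻¹ * X).trace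
          ≤ Real.sqrt (2 * α * β) *
              (psqrt (X * Xᵀ + ε • (1 : Matrix (Fin m) (Fin m) ℝ))).trace := by
    intro ε hε L hL
    obtain ⟨hQpd, hQQ⟩ := hQfacts ε hε
    set Q := psqrt (X * Xᵀ + ε • (1 : Matrix (Fin m) (Fin m) ℝ)) with hQdef
    have hdet : IsUnit Q.det := (Matrix.isUnit_iff_isUnit_det Q).mp hQpd.isUnit
    have hLinv : L⁻¹ = c⁻¹ • Q⁻¹ := by rw [hL]; exact inv_smul_mat hdet hc.ne'
    have hXXQ : X * Xᵀ * Q⁻¹ = Q - ε • Q⁻¹ := by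
      have h1 : X * Xᵀ = Q * Q - ε • (1 : Matrix (Fin m) (Fin m) ℝ) := by
        rw [hQQ]; abel
      rw [h1, Matrix.sub_mul, Matrix.mul_assoc, Matrix.mul_nonsing_inv Q hdet,
        mul_one, Matrix.smul_mul, Matrix.one_mul]
    have htr : (Xᵀ * L⁻¹ * X).trace = c⁻¹ * (Q.trace - ε * Q⁻¹.trace) := by
      rw [trace_mul_cycle, hLinv, Matrix.mul_smul, trace_smul, smul_eq_mul,
        hXXQ, trace_sub, trace_smul, smul_eq_mul]
    have hLtr : L.trace = c * Q.trace := by rw [hL, trace_smul, smul_eq_mul]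
    have hQtr : 0 ≤ Q.trace := psd_trace_nonneg hQpd.posSemidef
    have hQitr : 0 ≤ Q⁻¹.trace := psd_trace_nonneg hQpd.inv.posSemidef
    rw [htr, hLtr]
    have hle : α * (c * Q.trace) + β / 2 * (c⁻¹ * (Q.trace - ε * Q⁻¹.trace))
        ≤ (α * c + β / 2 * c⁻¹) * Q.trace := by
      have : 0 ≤ β / 2 * c⁻¹ * (ε * Q⁻¹.trace) := by positivity
      ring_nf
      nlinarith
    calc α * (c * Q.trace) + β / 2 * (c⁻¹ * (Q.trace - ε * Q⁻¹.trace))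
        ≤ (α * c + β / 2 * c⁻¹) * Q.trace := hle
      _ = Real.sqrt (2 * α * β) * Q.trace := by rw [hkey]
  refine ⟨hmain, ?_⟩
  -- second part
  set U : Matrix (Fin m) (Fin m) ℝ := (hA.1.eigenvectorUnitary : Matrix (Fin m) (Fin m) ℝ)
    with hUdef
  set lam := hA.1.eigenvalues with hlamdef
  have hU1 : U * star U = 1 := mem_unitaryGroup_iff.mp hA.1.eigenvectorUnitary.2
  have hU2 : star U * U = 1 := mem_unitaryGroup_iff'.mp hA.1.eigenvectorUnitary.2
  have hspec : X * Xᵀ = U * diagonal lam * star U := by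
    have := hA.1.spectral_theorem
    rwa [RCLike.ofReal_real_eq_id, Function.id_comp] at this
  have hlam : ∀ i, 0 ≤ lam i := hA.eigenvalues_nonneg
  have key : ∀ ε : ℝ, 0 ≤ ε →
      psqrt (X * Xᵀ + ε • (1 : Matrix (Fin m) (Fin m) ℝ)) =
        U * diagonal (fun i => Real.sqrt (lam i + ε)) * star U := by
    intro ε hε
    set C : Matrix (Fin m) (Fin m) ℝ :=
      U * diagonal (fun i => Real.sqrt (lam i + ε)) * star U with hCdef
    have hCpsd : C.PosSemidef := by
      rw [hCdef, star_eq_conjTranspose]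
      exact PosSemidef.mul_mul_conjTranspose_same
        (posSemidef_diagonal_iff.mpr fun i => Real.sqrt_nonneg _) U
    have hDD : diagonal (fun i => Real.sqrt (lam i + ε)) *
        diagonal (fun i => Real.sqrt (lam i + ε)) =
        diagonal lam + ε • (1 : Matrix (Fin m) (Fin m) ℝ) := by
      rw [diagonal_mul_diagonal]
      have h1 : (fun i => Real.sqrt (lam i + ε) * Real.sqrt (lam i + ε)) =
          fun i => lam i + ε := by
        funext i
        exact Real.mul_self_sqrt (by have := hlam i; linarith)
      rw [h1, smul_one_eq_diagonal, ← diagonal_add]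
    have hCsq : C ^ 2 = X * Xᵀ + ε • (1 : Matrix (Fin m) (Fin m) ℝ) := by
      rw [pow_two, hCdef]
      calc U * diagonal (fun i => Real.sqrt (lam i + ε)) * star U *
            (U * diagonal (fun i => Real.sqrt (lam i + ε)) * star U)
          = U * diagonal (fun i => Real.sqrt (lam i + ε)) * (star U * U) *
            diagonal (fun i => Real.sqrt (lam i + ε)) * star U := by
            simp only [Matrix.mul_assoc]
        _ = U * (diagonal (fun i => Real.sqrt (lam i + ε)) *
            diagonal (fun i => Real.sqrt (lam i + ε))) * star U := by
            rw [hU2, Matrix.mul_one]; simp only [Matrix.mul_assoc]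
        _ = U * (diagonal lam + ε • (1 : Matrix (Fin m) (Fin m) ℝ)) * star U := by rw [hDD]
        _ = X * Xᵀ + ε • (1 : Matrix (Fin m) (Fin m) ℝ) := by
            rw [Matrix.mul_add, Matrix.add_mul, ← hspec, Matrix.mul_smul, Matrix.smul_mul,
              Matrix.mul_one, hU1]
    have hpsd : (X * Xᵀ + ε • (1 : Matrix (Fin m) (Fin m) ℝ)).PosSemidef := by
      rw [← hCsq]; exact hCpsd.pow 2
    rw [psqrt_eq_csqrt hpsd]
    exact (eq_csqrt_of_sq_eq hCpsd hCsq).symm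
  have trkey : ∀ ε : ℝ, 0 ≤ ε →
      (psqrt (X * Xᵀ + ε • (1 : Matrix (Fin m) (Fin m) ℝ))).trace =
        ∑ i, Real.sqrt (lam i + ε) := by
    intro ε hε
    rw [key ε hε, trace_mul_cycle, hU2, Matrix.one_mul, trace_diagonal]
  have hnn : nuclearNorm X = ∑ i, Real.sqrt (lam i) := by
    have h0 : X * Xᵀ + (0:ℝ) • (1 : Matrix (Fin m) (Fin m) ℝ) = X * Xᵀ := by
      rw [zero_smul, add_zero]
    have := trkey 0 le_rfl
    rw [h0] at this
    simpa [nuclearNorm] using this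
  intro δ hδ
  set K := Real.sqrt (2 * α * β) with hKdef
  have hK : 0 ≤ K := Real.sqrt_nonneg _
  have hden : 0 < K * m + 1 := by positivity
  set ε : ℝ := (δ / (K * m + 1)) ^ 2 with hεdef
  have hεpos : 0 < ε := by positivity
  refine ⟨c • psqrt (X * Xᵀ + ε • (1 : Matrix (Fin m) (Fin m) ℝ)),
    posDef_smul' (hQfacts ε hεpos).1 hc, le_trans (hmain ε hεpos _ rfl) ?_⟩
  have hsqε : Real.sqrt ε = δ / (K * m + 1) := by
    rw [hεdef, Real.sqrt_sq (by positivity)]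
  have htrle : (psqrt (X * Xᵀ + ε • (1 : Matrix (Fin m) (Fin m) ℝ))).trace
      ≤ nuclearNorm X + m * Real.sqrt ε := by
    rw [trkey ε hεpos.le, hnn]
    calc ∑ i, Real.sqrt (lam i + ε)
        ≤ ∑ i : Fin m, (Real.sqrt (lam i) + Real.sqrt ε) :=
          Finset.sum_le_sum fun i _ => sqrt_add_le' (hlam i) hεpos.le
      _ = (∑ i, Real.sqrt (lam i)) + m * Real.sqrt ε := by
          rw [Finset.sum_add_distrib, Finset.sum_const, Finset.card_univ, Fintype.card_fin,
            nsmul_eq_mul]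
  calc K * (psqrt (X * Xᵀ + ε • (1 : Matrix (Fin m) (Fin m) ℝ))).trace
      ≤ K * (nuclearNorm X + m * Real.sqrt ε) := by
        exact mul_le_mul_of_nonneg_left htrle hK
    _ ≤ K * nuclearNorm X + δ := by
        rw [hsqε, mul_add]
        have : K * (m * (δ / (K * m + 1))) ≤ δ := by
          rw [div_eq_mul_inv]
          rw [show K * (m * (δ * (K * m + 1)⁻¹)) = (K * m) * δ * (K * m + 1)⁻¹ by ring]
          rw [← div_eq_mul_inv, div_le_iff₀ hden]
          nlinarith [hδ.le, mul_nonneg hK (Nat.cast_nonneg (α := ℝ) m)]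
        linarith
end

section
/- The hyperbolic smoothing Ψ̃^H(S; L) = tr(√(S S^T + L L^T)) satisfies upper stability with constant 1: for PSD matrices L₁ ⪯ L₂ and any S ∈ R^{m×n}, Ψ̃^H(S; L₂) − Ψ̃^H(S; L₁) ≤ tr(L₂) − tr(L₁). -/
open Matrix Finset
open scoped Classical

/-- The hyperbolic smoothing `Ψ̃^H(S; L) = tr(√(S Sᵀ + L Lᵀ))`. -/
noncomputable def psiH {m n : ℕ} (S : Matrix (Fin m) (Fin n) ℝ)
    (L : Matrix (Fin m) (Fin m) ℝ) : ℝ :=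
  (psqrt (S * Sᵀ + L * Lᵀ)).trace

open scoped MatrixOrder in
lemma psqrt_eq {m : ℕ} {A : Matrix (Fin m) (Fin m) ℝ} (h : A.PosSemidef) :
    psqrt A = CFC.sqrt A := by
  rw [psqrt, dif_pos h, CFC.sqrt_eq_real_sqrt A h.nonneg, cfcₙ_eq_cfc, h.1.cfc_eq,
    IsHermitian.cfc, Unitary.conjStarAlgAut_apply]
  rfl

open scoped MatrixOrder in
lemma psqrt_posSemidef {m : ℕ} {A : Matrix (Fin m) (Fin m) ℝ} (h : A.PosSemidef) :
    (psqrt A).PosSemidef := by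
  rw [psqrt_eq h]; exact (CFC.sqrt_nonneg A).posSemidef

open scoped MatrixOrder in
lemma psqrt_mul_self {m : ℕ} {A : Matrix (Fin m) (Fin m) ℝ} (h : A.PosSemidef) :
    psqrt A * psqrt A = A := by rw [psqrt_eq h]; exact CFC.sqrt_mul_sqrt_self A h.nonneg

open scoped MatrixOrder in
lemma psqrt_sq {m : ℕ} {A : Matrix (Fin m) (Fin m) ℝ} (h : A.PosSemidef) :
    psqrt (A ^ 2) = A := by
  rw [psqrt_eq (h.pow 2)]; exact CFC.sqrt_sq A h.nonneg

lemma dot_cs {ι : Type*} [Fintype ι] (u v : ι → ℝ) :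
    (u ⬝ᵥ v) ^ 2 ≤ (u ⬝ᵥ u) * (v ⬝ᵥ v) := by
  simpa [dotProduct, pow_two] using Finset.sum_mul_sq_le_sq_mul_sq Finset.univ u v

lemma psd_dot {m : ℕ} {A : Matrix (Fin m) (Fin m) ℝ} (hA : A.PosSemidef) (x : Fin m → ℝ) :
    0 ≤ x ⬝ᵥ (A *ᵥ x) := by simpa using hA.dotProduct_mulVec_nonneg x

lemma dot_self_nonneg {ι : Type*} [Fintype ι] (u : ι → ℝ) : 0 ≤ u ⬝ᵥ u :=
  Finset.sum_nonneg fun i _ => mul_self_nonneg _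

lemma contraction_vec {m : ℕ} {k : Type*} [Fintype k] {Y : Matrix (Fin m) k ℝ}
    (hY : (1 - Y * Yᵀ).PosSemidef) (u : Fin m → ℝ) :
    (Yᵀ *ᵥ u) ⬝ᵥ (Yᵀ *ᵥ u) ≤ u ⬝ᵥ u := by
  have h := psd_dot hY u
  have : (1 - Y * Yᵀ) *ᵥ u = u - Y *ᵥ (Yᵀ *ᵥ u) := by
    rw [sub_mulVec, one_mulVec, ← mulVec_mulVec]
  rw [this, dotProduct_sub, sub_nonneg] at h
  calc (Yᵀ *ᵥ u) ⬝ᵥ (Yᵀ *ᵥ u) = u ⬝ᵥ (Y *ᵥ (Yᵀ *ᵥ u)) := by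
        rw [dotProduct_mulVec u, ← mulVec_transpose]
    _ ≤ u ⬝ᵥ u := h

lemma contraction_dot {m : ℕ} {Y : Matrix (Fin m) (Fin m) ℝ}
    (hY : (1 - Y * Yᵀ).PosSemidef) (u : Fin m → ℝ) :
    u ⬝ᵥ (Y *ᵥ u) ≤ u ⬝ᵥ u := by
  set w := Yᵀ *ᵥ u with hw
  have h1 : w ⬝ᵥ w ≤ u ⬝ᵥ u := contraction_vec hY u
  have h2 : u ⬝ᵥ (Y *ᵥ u) = w ⬝ᵥ u := by
    rw [hw, dotProduct_mulVec u, ← mulVec_transpose, dotProduct_comm]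
  have h3 : (w ⬝ᵥ u) ^ 2 ≤ (w ⬝ᵥ w) * (u ⬝ᵥ u) := dot_cs w u
  have h4 : 0 ≤ u ⬝ᵥ u := dot_self_nonneg u
  have h5 : 0 ≤ w ⬝ᵥ w := dot_self_nonneg w
  rw [h2]
  nlinarith [h3, h1, h4, h5]

lemma flip_contraction {m : ℕ} {k : Type*} [Fintype k] [DecidableEq k]
    {X : Matrix (Fin m) k ℝ} (hX : (1 - X * Xᵀ).PosSemidef) :
    (1 - Xᵀ * X).PosSemidef := by
  refine Matrix.PosSemidef.of_dotProduct_mulVec_nonneg ?_ ?_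
  · have h1 : ((1 : Matrix k k ℝ) - Xᵀ * X)ᴴ = 1 - (Xᵀ * X)ᴴ := by
      rw [conjTranspose_sub, conjTranspose_one]
    rw [IsHermitian, h1, conjTranspose_mul, conjTranspose_eq_transpose_of_trivial,
      conjTranspose_eq_transpose_of_trivial, transpose_transpose]
  · intro v
    simp only [star_trivial]
    have key : (X *ᵥ v) ⬝ᵥ (X *ᵥ v) ≤ v ⬝ᵥ v := by
      set z := X *ᵥ v with hz
      have h1 : (Xᵀ *ᵥ z) ⬝ᵥ (Xᵀ *ᵥ z) ≤ z ⬝ᵥ z := contraction_vec hX z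
      have h2 : z ⬝ᵥ z = (Xᵀ *ᵥ z) ⬝ᵥ v := by
        rw [mulVec_transpose, ← dotProduct_mulVec, hz]
      have h3 : ((Xᵀ *ᵥ z) ⬝ᵥ v) ^ 2 ≤ ((Xᵀ *ᵥ z) ⬝ᵥ (Xᵀ *ᵥ z)) * (v ⬝ᵥ v) := dot_cs _ _
      have h4 := dot_self_nonneg v
      have h5 := dot_self_nonneg z
      have h6 := dot_self_nonneg (Xᵀ *ᵥ z)
      nlinarith [h3, h1, h2, h4, h5, h6]
    have : (1 - Xᵀ * X) *ᵥ v = v - Xᵀ *ᵥ (X *ᵥ v) := by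
      rw [sub_mulVec, one_mulVec, ← mulVec_mulVec]
    rw [this, dotProduct_sub, sub_nonneg]
    calc v ⬝ᵥ (Xᵀ *ᵥ (X *ᵥ v)) = (X *ᵥ v) ⬝ᵥ (X *ᵥ v) := by
          rw [dotProduct_mulVec v, ← mulVec_transpose, transpose_transpose]
      _ ≤ v ⬝ᵥ v := key

lemma trace_mul_le_of_contraction {m : ℕ} {P Y : Matrix (Fin m) (Fin m) ℝ}
    (hP : P.PosSemidef) (hY : (1 - Y * Yᵀ).PosSemidef) :
    (P * Y).trace ≤ P.trace := by
  set R := psqrt P with hR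
  have hRP : R * R = P := psqrt_mul_self hP
  have hRsym : Rᵀ = R := by
    have := (psqrt_posSemidef hP).1
    rwa [IsHermitian, conjTranspose_eq_transpose_of_trivial] at this
  have htr : (P * Y).trace = (R * Y * R).trace := by
    rw [← hRP, Matrix.mul_assoc, trace_mul_comm]
  have hdiag : ∀ i, (R * Y * R) i i = (fun j => R i j) ⬝ᵥ (Y *ᵥ (fun j => R i j)) := by
    intro i
    have hcol : ∀ j, R j i = R i j := fun j => by (conv_lhs => rw [← hRsym]); exact transpose_apply ..
    simp only [mul_apply, mulVec, dotProduct, Finset.sum_mul, Finset.mul_sum]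
    rw [Finset.sum_comm]
    refine Finset.sum_congr rfl fun a _ => Finset.sum_congr rfl fun b _ => ?_
    rw [hcol b]; ring
  have hdiag2 : ∀ i, (P : Matrix (Fin m) (Fin m) ℝ) i i
      = (fun j => R i j) ⬝ᵥ (fun j => R i j) := by
    intro i
    have hcol : ∀ j, R j i = R i j := fun j => by (conv_lhs => rw [← hRsym]); exact transpose_apply ..
    rw [← hRP]
    simp only [mul_apply, dotProduct]
    exact Finset.sum_congr rfl fun a _ => by rw [hcol a]
  rw [htr, trace, trace]
  refine Finset.sum_le_sum fun i _ => ?_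
  simp only [Matrix.diag_apply]
  rw [hdiag i, hdiag2 i]
  exact contraction_dot hY _

lemma exists_pinv {m : ℕ} {P : Matrix (Fin m) (Fin m) ℝ} (hP : P.PosSemidef) :
    ∃ Q : Matrix (Fin m) (Fin m) ℝ, Qᵀ = Q ∧ P * Q = Q * P ∧ P * Q * P = P ∧
      (P * Q) * (P * Q) = P * Q ∧ (1 - P * Q).PosSemidef := by
  have hH := hP.1
  set U : Matrix (Fin m) (Fin m) ℝ := (hH.eigenvectorUnitary : Matrix (Fin m) (Fin m) ℝ) with hUdef
  have hU1 : U * star U = 1 := mem_unitaryGroup_iff.mp hH.eigenvectorUnitary.2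
  have hU2 : star U * U = 1 := mem_unitaryGroup_iff'.mp hH.eigenvectorUnitary.2
  set l := hH.eigenvalues with hl
  have hspec : P = U * diagonal l * star U := by
    have h := hH.spectral_theorem
    rwa [RCLike.ofReal_real_eq_id, Function.id_comp] at h
  have key : ∀ f g : Fin m → ℝ, (U * diagonal f * star U) * (U * diagonal g * star U)
      = U * diagonal (fun i => f i * g i) * star U := by
    intro f g
    have h1 : star U * (U * (diagonal g * star U)) = diagonal g * star U := by
      rw [← Matrix.mul_assoc, hU2, one_mul]
    calc (U * diagonal f * star U) * (U * diagonal g * star U)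
        = U * (diagonal f * (star U * (U * (diagonal g * star U)))) := by
          simp only [Matrix.mul_assoc]
      _ = U * (diagonal f * (diagonal g * star U)) := by rw [h1]
      _ = U * diagonal (fun i => f i * g i) * star U := by
          rw [← Matrix.mul_assoc (diagonal f), diagonal_mul_diagonal]
          simp only [Matrix.mul_assoc]
  have hermKey : ∀ f : Fin m → ℝ, (U * diagonal f * star U)ᵀ = U * diagonal f * star U := by
    intro f
    have hsU : star U = Uᵀ := by
      rw [Matrix.star_eq_conjTranspose, conjTranspose_eq_transpose_of_trivial]
    rw [hsU, transpose_mul, transpose_mul, transpose_transpose, diagonal_transpose, Matrix.mul_assoc]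
  have psdKey : ∀ f : Fin m → ℝ, (0 : Fin m → ℝ) ≤ f → (U * diagonal f * star U).PosSemidef := by
    intro f hf
    have h := (posSemidef_diagonal_iff.mpr fun i => hf i).mul_mul_conjTranspose_same U
    rwa [← Matrix.star_eq_conjTranspose] at h
  have hone : (1 : Matrix (Fin m) (Fin m) ℝ) = U * diagonal (fun _ => 1) * star U := by
    rw [show diagonal (fun _ : Fin m => (1:ℝ)) = 1 from diagonal_one, mul_one, hU1]
  refine ⟨U * diagonal (fun i => (l i)⁻¹) * star U, hermKey _, ?_, ?_, ?_, ?_⟩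
  · rw [hspec, key, key]
    congr 1
    · congr 1
      exact congrArg diagonal (funext fun i => mul_comm _ _)
  · rw [hspec, key, key]
    congr 2
    exact funext fun i => by rcases eq_or_ne (l i) 0 with h | h <;> field_simp [h]
  · rw [hspec, key, key]
    congr 2
    exact funext fun i => by rcases eq_or_ne (l i) 0 with h | h <;> field_simp [h]
  · rw [hspec, key]
    have hsub : (1 : Matrix (Fin m) (Fin m) ℝ) - U * diagonal (fun i => l i * (l i)⁻¹) * star U
        = U * diagonal (fun i => 1 - l i * (l i)⁻¹) * star U := by
      rw [hone]
      rw [show diagonal (fun i => 1 - l i * (l i)⁻¹)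
          = diagonal (fun _ : Fin m => (1:ℝ)) - diagonal (fun i => l i * (l i)⁻¹) from by
        rw [diagonal_sub]]
      rw [Matrix.mul_sub, Matrix.sub_mul]
    rw [hsub]
    refine psdKey _ fun i => ?_
    rcases eq_or_ne (l i) 0 with h | h
    · simp [h]
    · simp [mul_inv_cancel₀ h]

lemma posSemidef_mul_transpose {m : ℕ} {k : Type*} [Fintype k]
    (A : Matrix (Fin m) k ℝ) : (A * Aᵀ).PosSemidef := by
  have h := posSemidef_self_mul_conjTranspose A
  rwa [conjTranspose_eq_transpose_of_trivial] at h

lemma range_fact {m : ℕ} {k : Type*} [Fintype k] {P Q : Matrix (Fin m) (Fin m) ℝ}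
    {A : Matrix (Fin m) k ℝ} (hPP : P * P = A * Aᵀ) (hQt : Qᵀ = Q)
    (hcomm : P * Q = Q * P) (hPQP : P * Q * P = P) (hPt : Pᵀ = P) :
    (P * Q) * A = A := by
  set M := (1 - P * Q) * A with hM
  have hsym : (1 - P * Q)ᵀ = 1 - P * Q := by
    rw [transpose_sub, transpose_one, transpose_mul, hQt, hPt, ← hcomm]
  have h0 : (1 - P * Q) * P = 0 := by
    rw [Matrix.sub_mul, Matrix.one_mul, hPQP, sub_self]
  have hMMt : M * Mᵀ = 0 := by
    rw [hM, transpose_mul, hsym]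
    calc (1 - P * Q) * A * (Aᵀ * (1 - P * Q))
        = (1 - P * Q) * (A * Aᵀ) * (1 - P * Q) := by simp only [Matrix.mul_assoc]
      _ = ((1 - P * Q) * P) * (P * (1 - P * Q)) := by rw [← hPP]; simp only [Matrix.mul_assoc]
      _ = 0 := by rw [h0, Matrix.zero_mul]
  have hMt : (Mᵀ)ᴴ * Mᵀ = 0 := by
    rw [conjTranspose_eq_transpose_of_trivial, transpose_transpose]
    exact hMMt
  have : Mᵀ = 0 := conjTranspose_mul_self_eq_zero.mp hMt
  have hM0 : M = 0 := transpose_eq_zero.mp this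
  have h := sub_eq_zero.mp (by rw [← hM0, hM, Matrix.sub_mul, Matrix.one_mul])
  exact h.symm

lemma dual_le {m : ℕ} {k : Type*} [Fintype k] [DecidableEq k]
    (A X : Matrix (Fin m) k ℝ) (hX : (1 - Xᵀ * X).PosSemidef) :
    (A * Xᵀ).trace ≤ (psqrt (A * Aᵀ)).trace := by
  have hAA : (A * Aᵀ).PosSemidef := posSemidef_mul_transpose A
  set P := psqrt (A * Aᵀ) with hPdef
  have hPsd : P.PosSemidef := psqrt_posSemidef hAA
  have hPP : P * P = A * Aᵀ := psqrt_mul_self hAA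
  have hPt : Pᵀ = P := by
    have := hPsd.1
    rwa [IsHermitian, conjTranspose_eq_transpose_of_trivial] at this
  obtain ⟨Q, hQt, hcomm, hPQP, hidem, hpsd1⟩ := exists_pinv hPsd
  have hrange : (P * Q) * A = A := range_fact hPP hQt hcomm hPQP hPt
  set W := Q * A with hW
  have hA_PW : A = P * W := by rw [hW, ← Matrix.mul_assoc, hrange]
  set Y := W * Xᵀ with hY
  have hAX : A * Xᵀ = P * Y := by rw [hY, ← Matrix.mul_assoc, ← hA_PW]
  have hWWt : W * Wᵀ = P * Q := by
    have : Wᵀ = Aᵀ * Q := by rw [hW, transpose_mul, hQt]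
    rw [hW, this]
    calc Q * A * (Aᵀ * Q) = Q * (A * Aᵀ) * Q := by simp only [Matrix.mul_assoc]
      _ = (Q * P) * (P * Q) := by rw [← hPP]; simp only [Matrix.mul_assoc]
      _ = (P * Q) * (P * Q) := by rw [← hcomm]
      _ = P * Q := hidem
  have hYcontr : (1 - Y * Yᵀ).PosSemidef := by
    have h1 : Y * Yᵀ = W * (Xᵀ * X) * Wᵀ := by
      rw [hY, transpose_mul, transpose_transpose]
      simp only [Matrix.mul_assoc]
    have h2 : (W * (1 - Xᵀ * X) * Wᴴ).PosSemidef := hX.mul_mul_conjTranspose_same W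
    rw [conjTranspose_eq_transpose_of_trivial] at h2
    have h3 : W * (1 - Xᵀ * X) * Wᵀ = P * Q - Y * Yᵀ := by
      rw [Matrix.mul_sub, Matrix.mul_one, Matrix.sub_mul, hWWt, h1]
    rw [h3] at h2
    have h4 : (1 : Matrix (Fin m) (Fin m) ℝ) - Y * Yᵀ
        = (1 - P * Q) + (P * Q - Y * Yᵀ) := by abel
    rw [h4]
    exact hpsd1.add h2
  rw [hAX]
  exact trace_mul_le_of_contraction hPsd hYcontr

lemma nuclear_triangle {m : ℕ} {k : Type*} [Fintype k] [DecidableEq k]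
    (A B : Matrix (Fin m) k ℝ) :
    (psqrt ((A + B) * (A + B)ᵀ)).trace
      ≤ (psqrt (A * Aᵀ)).trace + (psqrt (B * Bᵀ)).trace := by
  set C := A + B with hC
  have hCC : (C * Cᵀ).PosSemidef := posSemidef_mul_transpose C
  set P := psqrt (C * Cᵀ) with hPdef
  have hPsd : P.PosSemidef := psqrt_posSemidef hCC
  have hPP : P * P = C * Cᵀ := psqrt_mul_self hCC
  obtain ⟨Q, hQt, hcomm, hPQP, hidem, hpsd1⟩ := exists_pinv hPsd
  set X := Q * C with hX
  have hXXt : X * Xᵀ = P * Q := by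
    have h : Xᵀ = Cᵀ * Q := by rw [hX, transpose_mul, hQt]
    rw [hX, h]
    calc Q * C * (Cᵀ * Q) = Q * (C * Cᵀ) * Q := by simp only [Matrix.mul_assoc]
      _ = (Q * P) * (P * Q) := by rw [← hPP]; simp only [Matrix.mul_assoc]
      _ = (P * Q) * (P * Q) := by rw [← hcomm]
      _ = P * Q := hidem
  have hX1 : (1 - X * Xᵀ).PosSemidef := by rw [hXXt]; exact hpsd1
  have hX2 : (1 - Xᵀ * X).PosSemidef := flip_contraction hX1
  have hattain : (C * Xᵀ).trace = P.trace := by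
    have h : Xᵀ = Cᵀ * Q := by rw [hX, transpose_mul, hQt]
    have h1 : C * Xᵀ = P * (P * Q) := by
      rw [h, ← Matrix.mul_assoc, ← hPP]; simp only [Matrix.mul_assoc]
    rw [h1, trace_mul_comm]
    exact congrArg trace hPQP
  have hsplit : (C * Xᵀ).trace = (A * Xᵀ).trace + (B * Xᵀ).trace := by
    rw [hC, Matrix.add_mul, trace_add]
  have d1 := dual_le A X hX2
  have d2 := dual_le B X hX2
  linarith [hattain, hsplit, d1, d2]

/-- the hyperbolic smoothing satisfies upper stability with constant
`1`: for PSD matrices `L₁ ⪯ L₂` and any `S`,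
`Ψ̃^H(S; L₂) − Ψ̃^H(S; L₁) ≤ tr L₂ − tr L₁`. -/
theorem stmt11 {m n : ℕ} (S : Matrix (Fin m) (Fin n) ℝ)
    (L₁ L₂ : Matrix (Fin m) (Fin m) ℝ) (h₁ : L₁.PosSemidef)
    (h₁₂ : (L₂ - L₁).PosSemidef) :
    psiH S L₂ - psiH S L₁ ≤ L₂.trace - L₁.trace := by
  set D := L₂ - L₁ with hDdef
  set A := fromCols S L₁ with hA
  set B := fromCols (0 : Matrix (Fin m) (Fin n) ℝ) D with hB
  have hAB : A + B = fromCols S L₂ := by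
    ext i j
    cases j with
    | inl j => simp [hA, hB, fromCols]
    | inr j => simp [hA, hB, fromCols, hDdef]
  have hAAt : A * Aᵀ = S * Sᵀ + L₁ * L₁ᵀ := by
    rw [hA, transpose_fromCols, fromCols_mul_fromRows]
  have hABt : (A + B) * (A + B)ᵀ = S * Sᵀ + L₂ * L₂ᵀ := by
    rw [hAB, transpose_fromCols, fromCols_mul_fromRows]
  have hBBt : B * Bᵀ = D * Dᵀ := by
    rw [hB, transpose_fromCols, fromCols_mul_fromRows]
    simp
  have hDt : Dᵀ = D := by
    have := h₁₂.1
    rwa [IsHermitian, conjTranspose_eq_transpose_of_trivial] at this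
  have hpsB : (psqrt (B * Bᵀ)).trace = D.trace := by
    rw [hBBt, hDt, show D * D = D ^ 2 from (sq D).symm, psqrt_sq h₁₂]
  have main := nuclear_triangle A B
  rw [hAAt, hABt, hpsB] at main
  have hDtr : D.trace = L₂.trace - L₁.trace := by rw [hDdef, trace_sub]
  have e2 : psiH S L₂ = (psqrt (S * Sᵀ + L₂ * L₂ᵀ)).trace := rfl
  have e1 : psiH S L₁ = (psqrt (S * Sᵀ + L₁ * L₁ᵀ)).trace := rfl
  rw [e1, e2]
  linarith [main, hDtr]
end
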